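/- Any path extension of a family B is well-graded: if B' is the collection of all sets occurring on a path family (tight paths π_{K,L} from K to K ∪ L in the power set of ∪B, for all K, L ∈ B), then the span of B' is well-graded. -/

import Mathlib

open Finset

variable {α : Type*} [DecidableEq α]

/-- The span of a family `G`: all unions of nonempty subfamilies of `G`. -/
def Span (G : Finset (Finset α)) : Finset (Finset α) :=
  (G.powerset.filter Finset.Nonempty).image fun H => H.sup id

/-- A family is ∪-closed if it contains the union of each of its nonempty subfamilies. -/
def UnionClosed (F : Finset (Finset α)) : Prop :=
  ∀ H ⊆ F, H.Nonempty → H.sup id ∈ F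

/-- `p` is a tight path from `P` to `Q` inside the family `F`. -/
def IsTightPath (F : Finset (Finset α)) (P Q : Finset α) (p : List (Finset α)) : Prop :=
  p.head? = some P ∧ p.getLast? = some Q ∧
  p.length = (symmDiff P Q).card + 1 ∧
  (∀ S ∈ p, S ∈ F) ∧
  List.Chain' (fun A B => (symmDiff A B).card = 1) p

/-- A family is well-graded if any two distinct members are joined by a tight path. -/
def WellGraded (F : Finset (Finset α)) : Prop :=
  ∀ P ∈ F, ∀ Q ∈ F, P ≠ Q → ∃ p, IsTightPath F P Q p

/-- `B` is a base of `F`: a minimal subfamily of `F` spanning `F`. -/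
def IsBase (B F : Finset (Finset α)) : Prop :=
  B ⊆ F ∧ Span B = F ∧ ∀ H ⊆ B, Span H = F → H = B

/-- `A` is an atom of `F` at `x`: an inclusion-minimal member of `F` containing `x`. -/
def IsAtomAt (F : Finset (Finset α)) (x : α) (A : Finset α) : Prop :=
  A ∈ F ∧ x ∈ A ∧ ∀ B ∈ F, x ∈ B → B ⊆ A → B = A

/-- `A` is an atom of `F`: either the empty set (if it is in `F`) or an atom at some point. -/
def IsAtomOf (F : Finset (Finset α)) (A : Finset α) : Prop :=
  (A = ∅ ∧ A ∈ F) ∨ ∃ x, IsAtomAt F x A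

/-- The surmise function: the collection of atoms of `F` at `x`. -/
def surmise (F : Finset (Finset α)) (x : α) : Finset (Finset α) :=
  F.filter fun A => x ∈ A ∧ ∀ B ∈ F, x ∈ B → B ⊆ A → B = A

/-- `{σ(x) : x ∈ ∪F}` forms a partition of `B \ {∅}`. -/
def SurmisePartition (F B : Finset (Finset α)) : Prop :=
  (∀ x ∈ F.sup id, ∀ y ∈ F.sup id,
      surmise F x = surmise F y ∨ Disjoint (surmise F x) (surmise F y)) ∧
  (F.sup id).sup (surmise F) = B.erase ∅

/-- The endpoints of `X` in the family `B`: elements of `X` lying in no proper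
subset of `X` belonging to `B`. -/
def endpoints (B : Finset (Finset α)) (X : Finset α) : Finset α :=
  X \ (B.filter fun Y => Y ⊂ X).sup id

/-- A family is discriminative if points contained in the same members are equal. -/
def Discriminative (F : Finset (Finset α)) : Prop :=
  ∀ u ∈ F.sup id, ∀ v ∈ F.sup id, (∀ S ∈ F, (u ∈ S ↔ v ∈ S)) → u = v

/-- one-element insertion step -/
def PEStep (A C : Finset α) : Prop := ∃ x, x ∉ A ∧ C = insert x A

lemma pe_card_symmDiff_triangle (a b c : Finset α) :
    (symmDiff a c).card ≤ (symmDiff a b).card + (symmDiff b c).card :=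
  le_trans (Finset.card_le_card (symmDiff_triangle a b c)) (Finset.card_union_le _ _)

lemma pe_mem_span_iff {G : Finset (Finset α)} {S : Finset α} :
    S ∈ Span G ↔ ∃ H, H ⊆ G ∧ H.Nonempty ∧ H.sup id = S := by
  constructor
  · intro h
    simp only [Span, Finset.mem_image, Finset.mem_filter, Finset.mem_powerset] at h
    obtain ⟨H, ⟨h1, h2⟩, h3⟩ := h
    exact ⟨H, h1, h2, h3⟩
  · rintro ⟨H, h1, h2, h3⟩
    simp only [Span, Finset.mem_image, Finset.mem_filter, Finset.mem_powerset]
    exact ⟨H, ⟨h1, h2⟩, h3⟩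

lemma pe_mem_span_of_mem {G : Finset (Finset α)} {S : Finset α} (h : S ∈ G) : S ∈ Span G :=
  pe_mem_span_iff.mpr ⟨{S}, by simpa using h, singleton_nonempty S, by simp⟩

lemma pe_span_union {G : Finset (Finset α)} {P S : Finset α}
    (hP : P ∈ Span G) (hS : S ∈ G) : P ∪ S ∈ Span G := by
  obtain ⟨H, h1, h2, h3⟩ := pe_mem_span_iff.mp hP
  refine pe_mem_span_iff.mpr ⟨insert S H, ?_, insert_nonempty _ _, ?_⟩
  · exact insert_subset hS h1
  · rw [Finset.sup_insert, h3]; exact union_comm S P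

/-- triangle bound along a chain of unit steps -/
lemma pe_chain_bound : ∀ (p : List (Finset α)) (a b : Finset α),
    List.Chain' (fun A B => (symmDiff A B).card = 1) p →
    p.head? = some a → p.getLast? = some b →
    (symmDiff a b).card + 1 ≤ p.length := by
  intro p
  induction p with
  | nil => intro a b _ ha _; simp at ha
  | cons c rest ih =>
    intro a b hch ha hb
    simp only [List.head?_cons, Option.some.injEq] at ha
    subst ha
    cases rest with
    | nil =>
      simp only [List.getLast?_singleton, Option.some.injEq] at hb
      subst hb; simp
    | cons d t =>
      simp only [List.Chain', List.isChain_cons_cons] at hch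
      rw [List.getLast?_cons_cons] at hb
      have ihb := ih d b hch.2 rfl hb
      have htri := pe_card_symmDiff_triangle c d b
      rw [hch.1] at htri
      simp only [List.length_cons] at *
      omega

/-- a tight path with increasing endpoints is an increasing staircase -/
lemma pe_chain_step : ∀ (p : List (Finset α)) (a b : Finset α),
    List.Chain' (fun A B => (symmDiff A B).card = 1) p →
    p.head? = some a → p.getLast? = some b →
    p.length = (symmDiff a b).card + 1 → a ⊆ b →
    List.Chain' PEStep p := by
  intro p
  induction p with
  | nil => intro a b _ _ _ _ _; exact List.isChain_nil
  | cons c rest ih =>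
    intro a b hch ha hb hlen hab
    simp only [List.head?_cons, Option.some.injEq] at ha
    subst ha
    cases rest with
    | nil => simp [List.Chain']
    | cons d t =>
      simp only [List.Chain', List.isChain_cons_cons] at hch
      rw [List.getLast?_cons_cons] at hb
      -- length bookkeeping
      have hlen' : (d :: t).length = (symmDiff c b).card := by
        simpa using hlen
      have hbound := pe_chain_bound (d :: t) d b hch.2 rfl hb
      have htri := pe_card_symmDiff_triangle c d b
      rw [hch.1] at htri
      have heq : (symmDiff d b).card + 1 = (symmDiff c b).card := by omega
      -- analyze the step a → d
      obtain ⟨x, hxd⟩ := Finset.card_eq_one.mp hch.1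
      have hsd : ∀ y, (y ∈ c ∧ y ∉ d ∨ y ∈ d ∧ y ∉ c) ↔ y = x := by
        intro y
        rw [← Finset.mem_symmDiff, hxd, Finset.mem_singleton]
      have hpt : ∀ y, y ≠ x → (y ∈ c ↔ y ∈ d) := by
        intro y hy
        constructor <;> intro h <;> by_contra h'
        · exact hy ((hsd y).mp (Or.inl ⟨h, h'⟩))
        · exact hy ((hsd y).mp (Or.inr ⟨h, h'⟩))
      by_cases hxa : x ∈ c
      · -- x removed: contradiction
        exfalso
        have hxd' : x ∉ d := by
          intro hc
          rcases (hsd x).mpr rfl with ⟨_, h2⟩ | ⟨_, h2⟩ <;> [exact h2 hc; exact h2 hxa]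
        have hxb : x ∈ b := hab hxa
        have hsub : insert x (symmDiff c b) ⊆ symmDiff d b := by
          intro y hy
          rcases Finset.mem_insert.mp hy with rfl | hy'
          · rw [Finset.mem_symmDiff]; exact Or.inr ⟨hxb, hxd'⟩
          · have hyx : y ≠ x := by
              rintro rfl
              rw [Finset.mem_symmDiff] at hy'
              rcases hy' with ⟨_, h2⟩ | ⟨_, h2⟩ <;> [exact h2 hxb; exact h2 hxa]
            rw [Finset.mem_symmDiff] at hy' ⊢
            rw [← hpt y hyx]
            exact hy'
        have hxnotab : x ∉ symmDiff c b := by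
          rw [Finset.mem_symmDiff]
          rintro (⟨_, h2⟩ | ⟨_, h2⟩) <;> [exact h2 hxb; exact h2 hxa]
        have := Finset.card_le_card hsub
        rw [Finset.card_insert_of_notMem hxnotab] at this
        omega
      · -- x added
        have hxd'' : x ∈ d := by
          rcases (hsd x).mpr rfl with ⟨h1, _⟩ | ⟨h1, _⟩ <;> [exact absurd h1 hxa; exact h1]
        have hd : d = insert x c := by
          ext y
          by_cases hy : y = x
          · subst hy; simp [hxd'']
          · rw [Finset.mem_insert]
            constructor
            · intro h; exact Or.inr ((hpt y hy).mpr h)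
            · rintro (rfl | h); exact absurd rfl hy; exact (hpt y hy).mp h
        by_cases hxb : x ∈ b
        · -- good case
          have hdb : d ⊆ b := by
            rw [hd]; exact Finset.insert_subset hxb hab
          have := ih d b hch.2 rfl hb (by omega) hdb
          exact List.IsChain.cons_cons ⟨x, hxa, hd⟩ this
        · exfalso
          have hsub : insert x (symmDiff c b) ⊆ symmDiff d b := by
            intro y hy
            rcases Finset.mem_insert.mp hy with rfl | hy'
            · rw [Finset.mem_symmDiff]; exact Or.inl ⟨hxd'', hxb⟩
            · have hyx : y ≠ x := by
                rintro rfl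
                rw [Finset.mem_symmDiff] at hy'
                rcases hy' with ⟨h1, _⟩ | ⟨h1, _⟩ <;> [exact hxa h1; exact hxb h1]
              rw [Finset.mem_symmDiff] at hy' ⊢
              rw [← hpt y hyx]
              exact hy'
          have hxnotab : x ∉ symmDiff c b := by
            rw [Finset.mem_symmDiff]
            rintro (⟨h1, _⟩ | ⟨h1, _⟩) <;> [exact hxa h1; exact hxb h1]
          have := Finset.card_le_card hsub
          rw [Finset.card_insert_of_notMem hxnotab] at this
          omega

/-- extract the prefix of a staircase ending at a given member -/
lemma pe_exists_prefix : ∀ (p : List (Finset α)) (a : Finset α),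
    List.Chain' PEStep p → p.head? = some a → ∀ A ∈ p,
    ∃ q : List (Finset α), List.Chain' PEStep q ∧ q.head? = some a ∧
      q.getLast? = some A ∧ ∀ S ∈ q, S ∈ p := by
  intro p
  induction p with
  | nil => intro a _ ha; simp at ha
  | cons c rest ih =>
    intro a hch ha A hA
    simp only [List.head?_cons, Option.some.injEq] at ha
    subst ha
    rcases List.mem_cons.mp hA with rfl | hA'
    · exact ⟨[A], List.isChain_singleton A, rfl, rfl, by simp⟩
    · cases rest with
      | nil => simp at hA'
      | cons d t =>
        simp only [List.Chain', List.isChain_cons_cons] at hch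
        obtain ⟨q', hq1, hq2, hq3, hq4⟩ := ih d hch.2 rfl A hA'
        cases q' with
        | nil => simp at hq2
        | cons e t' =>
          simp only [List.head?_cons, Option.some.injEq] at hq2
          subst hq2
          refine ⟨c :: e :: t', ?_, rfl, ?_, ?_⟩
          · simp only [List.Chain']; rw [List.isChain_cons_cons]; exact ⟨hch.1, hq1⟩
          · rw [List.getLast?_cons_cons]; exact hq3
          · intro S hS
            rcases List.mem_cons.mp hS with rfl | hS'
            · exact List.mem_cons_self
            · exact List.mem_cons_of_mem _ (hq4 S hS')

/-- entries of a staircase are contained in its last element -/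
lemma pe_subset_last : ∀ (p : List (Finset α)) (b : Finset α),
    List.Chain' PEStep p → p.getLast? = some b → ∀ S ∈ p, S ⊆ b := by
  intro p
  induction p with
  | nil => intro b _ _ S hS; simp at hS
  | cons c rest ih =>
    intro b hch hb S hS
    cases rest with
    | nil =>
      simp only [List.getLast?_singleton, Option.some.injEq] at hb
      subst hb
      simp only [List.mem_singleton] at hS
      subst hS; exact subset_rfl
    | cons d t =>
      simp only [List.Chain', List.isChain_cons_cons] at hch
      rw [List.getLast?_cons_cons] at hb
      rcases List.mem_cons.mp hS with rfl | hS'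
      · obtain ⟨x, _, hd⟩ := hch.1
        have h1 : S ⊆ d := by rw [hd]; exact Finset.subset_insert _ _
        exact h1.trans (ih b hch.2 hb d (List.mem_cons_self))
      · exact ih b hch.2 hb S hS'

/-- the head of a staircase is contained in every entry -/
lemma pe_head_subset : ∀ (p : List (Finset α)) (a : Finset α),
    List.Chain' PEStep p → p.head? = some a → ∀ S ∈ p, a ⊆ S := by
  intro p
  induction p with
  | nil => intro a _ ha; simp at ha
  | cons c rest ih =>
    intro a hch ha S hS
    simp only [List.head?_cons, Option.some.injEq] at ha
    subst ha
    rcases List.mem_cons.mp hS with rfl | hS'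
    · exact subset_rfl
    · cases rest with
      | nil => simp at hS'
      | cons d t =>
        simp only [List.Chain', List.isChain_cons_cons] at hch
        obtain ⟨x, _, hd⟩ := hch.1
        have h1 : c ⊆ d := by rw [hd]; exact Finset.subset_insert _ _
        exact h1.trans (ih d hch.2 rfl S hS')

/-- crossing lemma: a staircase starting inside P and ending outside P,
with entries in B' and contained in P ∪ Q, yields an addable point of Q -/
lemma pe_crossing (B' : Finset (Finset α)) (P Q : Finset α) (hP : P ∈ Span B') :
    ∀ (p : List (Finset α)), List.Chain' PEStep p → (∀ S ∈ p, S ∈ B') →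
    (∀ S ∈ p, S ⊆ P ∪ Q) → ∀ a b, p.head? = some a → p.getLast? = some b →
    a ⊆ P → ¬ b ⊆ P → ∃ x, x ∈ Q ∧ x ∉ P ∧ insert x P ∈ Span B' := by
  intro p
  induction p with
  | nil => intro _ _ _ a b ha _ _ _; simp at ha
  | cons c rest ih =>
    intro hch hmem hsub a b ha hb haP hbP
    simp only [List.head?_cons, Option.some.injEq] at ha
    subst ha
    cases rest with
    | nil =>
      simp only [List.getLast?_singleton, Option.some.injEq] at hb
      subst hb; exact absurd haP hbP
    | cons d t =>
      simp only [List.Chain', List.isChain_cons_cons] at hch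
      rw [List.getLast?_cons_cons] at hb
      obtain ⟨x, hxc, hd⟩ := hch.1
      by_cases hdP : d ⊆ P
      · exact ih hch.2 (fun S hS => hmem S (List.mem_cons_of_mem _ hS))
          (fun S hS => hsub S (List.mem_cons_of_mem _ hS)) d b rfl hb hdP hbP
      · have hxP : x ∉ P := by
          intro hc
          apply hdP
          rw [hd]
          exact Finset.insert_subset hc haP
        have hxQ : x ∈ Q := by
          have : x ∈ P ∪ Q := hsub d (List.mem_cons_of_mem _ (List.mem_cons_self))
            (by rw [hd]; exact Finset.mem_insert_self _ _)
          rcases Finset.mem_union.mp this with h | h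
          · exact absurd h hxP
          · exact h
        refine ⟨x, hxQ, hxP, ?_⟩
        have hPd : P ∪ d = insert x P := by
          rw [hd]
          ext y
          simp only [Finset.mem_union, Finset.mem_insert]
          constructor
          · rintro (h | rfl | h)
            · exact Or.inr h
            · exact Or.inl rfl
            · exact Or.inr (haP h)
          · rintro (rfl | h)
            · exact Or.inr (Or.inl rfl)
            · exact Or.inl h
        rw [← hPd]
        exact pe_span_union hP (hmem d (List.mem_cons_of_mem _ (List.mem_cons_self)))

lemma pe_add_step (B : Finset (Finset α)) (π : Finset α → Finset α → List (Finset α))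
    (hπ : ∀ K ∈ B, ∀ L ∈ B, IsTightPath ((B.sup id).powerset) K (K ∪ L) (π K L))
    (B' : Finset (Finset α))
    (hB' : ∀ S : Finset α, S ∈ B' ↔ ∃ K ∈ B, ∃ L ∈ B, S ∈ π K L)
    (P Q : Finset α) (hP : P ∈ Span B') (hQ : Q ∈ Span B') (hQP : ¬ Q ⊆ P) :
    ∃ x, x ∈ Q ∧ x ∉ P ∧ insert x P ∈ Span B' := by
  obtain ⟨x0, hx0Q, hx0P⟩ := Finset.not_subset.mp hQP
  obtain ⟨H, hHB, hHne, hHsup⟩ := pe_mem_span_iff.mp hQ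
  have hx0sup : x0 ∈ H.sup id := by rw [hHsup]; exact hx0Q
  obtain ⟨A, hAH, hx0A⟩ := Finset.mem_sup.mp hx0sup
  have hAB' : A ∈ B' := hHB hAH
  have hAQ : A ⊆ Q := by rw [← hHsup]; exact Finset.le_sup (f := id) hAH
  have hAP : ¬ A ⊆ P := fun h => hx0P (h hx0A)
  obtain ⟨K, hKB, L, hLB, hAp⟩ := (hB' A).mp hAB'
  obtain ⟨hh, hl, hlen, _, hch⟩ := hπ K hKB L hLB
  have hstep : List.Chain' PEStep (π K L) :=
    pe_chain_step _ _ _ hch hh hl hlen Finset.subset_union_left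
  have hKA : K ⊆ A := pe_head_subset _ _ hstep hh A hAp
  obtain ⟨q, hq1, hq2, hq3, hq4⟩ := pe_exists_prefix _ _ hstep hh A hAp
  have hqB' : ∀ S ∈ q, S ∈ B' := fun S hS => (hB' S).mpr ⟨K, hKB, L, hLB, hq4 S hS⟩
  have hqsub : ∀ S ∈ q, S ⊆ P ∪ Q := fun S hS =>
    ((pe_subset_last _ _ hq1 hq3 S hS).trans hAQ).trans Finset.subset_union_right
  by_cases hKP : K ⊆ P
  · exact pe_crossing B' P Q hP q hq1 hqB' hqsub K A hq2 hq3 hKP hAP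
  · -- find a base inside P
    obtain ⟨H', hH'B, hH'ne, hH'sup⟩ := pe_mem_span_iff.mp hP
    obtain ⟨A', hA'H'⟩ := hH'ne
    have hA'B' : A' ∈ B' := hH'B hA'H'
    have hA'P : A' ⊆ P := by rw [← hH'sup]; exact Finset.le_sup (f := id) hA'H'
    obtain ⟨K', hK'B, L', hL'B, hA'p⟩ := (hB' A').mp hA'B'
    obtain ⟨hh', hl', hlen', _, hch'⟩ := hπ K' hK'B L' hL'B
    have hstep' : List.Chain' PEStep (π K' L') :=
      pe_chain_step _ _ _ hch' hh' hl' hlen' Finset.subset_union_left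
    have hK'P : K' ⊆ P := (pe_head_subset _ _ hstep' hh' A' hA'p).trans hA'P
    -- the path from K' to K' ∪ K
    obtain ⟨hh2, hl2, hlen2, _, hch2⟩ := hπ K' hK'B K hKB
    have hstep2 : List.Chain' PEStep (π K' K) :=
      pe_chain_step _ _ _ hch2 hh2 hl2 hlen2 Finset.subset_union_left
    have hmem2 : ∀ S ∈ π K' K, S ∈ B' := fun S hS => (hB' S).mpr ⟨K', hK'B, K, hKB, hS⟩
    have hsub2 : ∀ S ∈ π K' K, S ⊆ P ∪ Q := by
      intro S hS
      refine (pe_subset_last _ _ hstep2 hl2 S hS).trans ?_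
      exact Finset.union_subset (hK'P.trans Finset.subset_union_left)
        ((hKA.trans hAQ).trans Finset.subset_union_right)
    have hlast2 : ¬ K' ∪ K ⊆ P := fun h => hKP (Finset.subset_union_right.trans h)
    exact pe_crossing B' P Q hP (π K' K) hstep2 hmem2 hsub2 K' (K' ∪ K) hh2 hl2 hK'P hlast2

lemma pe_sd_insert_self (x : α) (P : Finset α) (hx : x ∉ P) :
    symmDiff P (insert x P) = {x} := by
  ext y
  simp only [Finset.mem_symmDiff, Finset.mem_insert, Finset.mem_singleton]
  constructor
  · rintro (⟨h1, h2⟩ | ⟨rfl | h1, h2⟩)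
    · exact absurd (Or.inr h1) h2
    · rfl
    · exact absurd h1 h2
  · rintro rfl
    exact Or.inr ⟨Or.inl rfl, hx⟩

lemma pe_sd_insert (x : α) (P Q : Finset α) (hxQ : x ∈ Q) (hxP : x ∉ P) :
    symmDiff (insert x P) Q = (symmDiff P Q).erase x := by
  ext y
  simp only [Finset.mem_symmDiff, Finset.mem_insert, Finset.mem_erase]
  constructor
  · rintro (⟨rfl | h1, h2⟩ | ⟨h1, h2⟩)
    · exact absurd hxQ h2
    · refine ⟨fun hy => ?_, Or.inl ⟨h1, h2⟩⟩
      subst hy; exact hxP h1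
    · have hyx : y ≠ x := by rintro rfl; exact h2 (Or.inl rfl)
      exact ⟨hyx, Or.inr ⟨h1, fun hc => h2 (Or.inr hc)⟩⟩
  · rintro ⟨hyx, ⟨h1, h2⟩ | ⟨h1, h2⟩⟩
    · exact Or.inl ⟨Or.inr h1, h2⟩
    · exact Or.inr ⟨h1, fun hc => by rcases hc with rfl | hc; exact hyx rfl; exact h2 hc⟩


/-- Any path extension is well-graded. -/
theorem path_extension_wellGraded (B : Finset (Finset α))
    (π : Finset α → Finset α → List (Finset α))
    (hπ : ∀ K ∈ B, ∀ L ∈ B, IsTightPath ((B.sup id).powerset) K (K ∪ L) (π K L))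
    (B' : Finset (Finset α))
    (hB' : ∀ S : Finset α, S ∈ B' ↔ ∃ K ∈ B, ∃ L ∈ B, S ∈ π K L) :
    WellGraded (Span B') := by
  intro P hP Q hQ hne
  suffices h : ∀ n (P Q : Finset α), (symmDiff P Q).card = n → P ∈ Span B' → Q ∈ Span B' →
      P ≠ Q → ∃ p, IsTightPath (Span B') P Q p from h _ P Q rfl hP hQ hne
  intro n
  induction n using Nat.strong_induction_on with
  | _ n ih =>
    intro P Q hcard hP hQ hne
    by_cases hQP : Q ⊆ P
    · -- then P ⊄ Q; grow Q towards P, appending Q at the end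
      have hPQ : ¬ P ⊆ Q := fun h => hne (Finset.Subset.antisymm h hQP)
      obtain ⟨x, hxP, hxQ, hR⟩ := pe_add_step B π hπ B' hB' Q P hQ hP hPQ
      set R := insert x Q with hRdef
      have hsd1 : symmDiff R Q = {x} := by
        rw [symmDiff_comm]; exact pe_sd_insert_self x Q hxQ
      have hsd2 : symmDiff P R = (symmDiff P Q).erase x := by
        rw [symmDiff_comm, hRdef, pe_sd_insert x Q P hxP hxQ, symmDiff_comm]
      have hxPQ : x ∈ symmDiff P Q := by
        rw [Finset.mem_symmDiff]; exact Or.inl ⟨hxP, hxQ⟩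
      have hn1 : 1 ≤ n := by
        rw [← hcard]; exact Finset.card_pos.mpr ⟨x, hxPQ⟩
      have hcard2 : (symmDiff P R).card = n - 1 := by
        rw [hsd2, Finset.card_erase_of_mem hxPQ, hcard]
      by_cases hRP : R = P
      · -- single step from P to Q
        refine ⟨[P, Q], rfl, rfl, ?_, ?_, ?_⟩
        · have h1 : (symmDiff P Q).card = 1 := by
            rw [hRP] at hsd1; rw [hsd1]; simp
          simp [h1]
        · intro S hS
          rcases List.mem_cons.mp hS with rfl | hS
          · exact hP
          · simp only [List.mem_singleton] at hS; subst hS; exact hQ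
        · have h1 : (symmDiff P Q).card = 1 := by rw [hRP] at hsd1; rw [hsd1]; simp
          simpa [List.Chain'] using h1
      · obtain ⟨p, hph, hpl, hplen, hpmem, hpch⟩ :=
          ih (n - 1) (by omega) P R hcard2 hP hR (fun h => hRP h.symm)
        refine ⟨p ++ [Q], ?_, ?_, ?_, ?_, ?_⟩
        · cases p with
          | nil => simp at hph
          | cons c t => simpa using hph
        · exact List.getLast?_concat
        · rw [List.length_append, hplen, hcard2, hcard]
          simp; omega
        · intro S hS
          rcases List.mem_append.mp hS with h | h
          · exact hpmem S h
          · simp only [List.mem_singleton] at h; subst h; exact hQ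
        · simp only [List.Chain']; rw [List.isChain_append]
          refine ⟨hpch, List.isChain_singleton _, ?_⟩
          intro a ha y hy
          simp only [List.head?_cons, Option.mem_def, Option.some.injEq] at hy
          subst hy
          rw [Option.mem_def, hpl, Option.some.injEq] at ha
          subst ha
          rw [hsd1]; simp
    · -- grow P towards Q
      obtain ⟨x, hxQ, hxP, hR⟩ := pe_add_step B π hπ B' hB' P Q hP hQ hQP
      set R := insert x P with hRdef
      have hsd1 : symmDiff P R = {x} := pe_sd_insert_self x P hxP
      have hsd2 : symmDiff R Q = (symmDiff P Q).erase x :=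
        pe_sd_insert x P Q hxQ hxP
      have hxPQ : x ∈ symmDiff P Q := by
        rw [Finset.mem_symmDiff]; exact Or.inr ⟨hxQ, hxP⟩
      have hn1 : 1 ≤ n := by
        rw [← hcard]; exact Finset.card_pos.mpr ⟨x, hxPQ⟩
      have hcard2 : (symmDiff R Q).card = n - 1 := by
        rw [hsd2, Finset.card_erase_of_mem hxPQ, hcard]
      by_cases hRQ : R = Q
      · refine ⟨[P, Q], rfl, rfl, ?_, ?_, ?_⟩
        · have h1 : (symmDiff P Q).card = 1 := by rw [hRQ] at hsd1; rw [hsd1]; simp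
          simp [h1]
        · intro S hS
          rcases List.mem_cons.mp hS with rfl | hS
          · exact hP
          · simp only [List.mem_singleton] at hS; subst hS; exact hQ
        · have h1 : (symmDiff P Q).card = 1 := by rw [hRQ] at hsd1; rw [hsd1]; simp
          simpa [List.Chain'] using h1
      · obtain ⟨p, hph, hpl, hplen, hpmem, hpch⟩ :=
          ih (n - 1) (by omega) R Q hcard2 hR hQ hRQ
        refine ⟨P :: p, rfl, ?_, ?_, ?_, ?_⟩
        · cases p with
          | nil => simp at hph
          | cons c t => rw [List.getLast?_cons_cons]; exact hpl
        · simp only [List.length_cons, hplen, hcard2, hcard]; omega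
        · intro S hS
          rcases List.mem_cons.mp hS with rfl | hS
          · exact hP
          · exact hpmem S hS
        · simp only [List.Chain']; rw [List.isChain_cons]
          refine ⟨?_, hpch⟩
          intro y hy
          rw [Option.mem_def, hph, Option.some.injEq] at hy
          subst hy
          rw [hsd1]; simp
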